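/- Let λ, μ be complex numbers with μ ≠ 0 and Re(λ) + |μ|²/2 < 0 (so Re(λ) < 0), and define h₀ = min( 1/|λ| , |μ|²/(2|λ|²) , √( 4(−2Re(λ) − |μ|²) / (−6Re(λ)·|λ|²) ) ). Then for every h with 0 < h < h₀, setting x = λh, y = μ√h, a = 1 + (3/2)x, b = y, c = −x/2, the following hold: |c| < 1; |a|²(1+|c|²) + 2Re(a²·conj(c)) < (1−|c|²)²; and |b|² < 1 − |c|² − |a|²(1+|c|²)/(1−|c|²) − 2Re(a²·conj(c))/(1−|c|²). -/

import Mathlib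

set_option maxHeartbeats 1000000
open ComplexConjugate

private lemma div_aux (D P Q : ℝ) (hD : D ≠ 0) :
    D - P / D - Q / D = (D ^ 2 - P - Q) / D := by
  field_simp

private lemma key_ineq (R S M2 h : ℝ) (hpos : 0 < h) (hS : 0 ≤ S)
    (hB : 2*S*h < M2) (hC : h^2*(6*(-R)*S) < 4*(-2*R - M2)) :
    2*R*h - (3/2)*R*S*h^3 + S^2*h^4/2 + M2*h*(1 - S*h^2/4) < 0 := by
  nlinarith [mul_lt_mul_of_pos_right hC hpos,
    mul_nonneg (mul_nonneg hS (pow_nonneg hpos.le 3)) (sub_nonneg.mpr hB.le)]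

theorem stmt_19 (lam mu : ℂ) (hmu : mu ≠ 0)
    (hstab : lam.re + ‖mu‖ ^ 2 / 2 < 0)
    (h₀ : ℝ)
    (hh₀ : h₀ = min (1 / ‖lam‖)
        (min (‖mu‖ ^ 2 / (2 * ‖lam‖ ^ 2))
          (Real.sqrt (4 * (-2 * lam.re - ‖mu‖ ^ 2)
            / (-6 * lam.re * ‖lam‖ ^ 2))))) :
    ∀ h : ℝ, 0 < h → h < h₀ →
      ∀ x y a b c : ℂ, x = lam * (h : ℂ) → y = mu * (Real.sqrt h : ℂ) →
        a = 1 + (3 / 2 : ℂ) * x → b = y → c = -x / 2 →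
        (‖c‖ < 1 ∧
         ‖a‖ ^ 2 * (1 + ‖c‖ ^ 2) + 2 * (a ^ 2 * conj c).re
           < (1 - ‖c‖ ^ 2) ^ 2 ∧
         ‖b‖ ^ 2
           < 1 - ‖c‖ ^ 2
             - ‖a‖ ^ 2 * (1 + ‖c‖ ^ 2) / (1 - ‖c‖ ^ 2)
             - 2 * (a ^ 2 * conj c).re / (1 - ‖c‖ ^ 2)) := by
  intro h hpos hlt x y a b c hx hy ha hb hc
  subst hx hy ha hb hc
  -- basic positivity facts
  have hmupos : 0 < ‖mu‖ := norm_pos_iff.mpr hmu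
  have hM2pos : 0 < ‖mu‖ ^ 2 := by positivity
  have hR : lam.re < 0 := by linarith
  have hlam : lam ≠ 0 := by
    intro h0; rw [h0] at hR; simp at hR
  have hLpos : 0 < ‖lam‖ := norm_pos_iff.mpr hlam
  have hSpos : 0 < ‖lam‖ ^ 2 := by positivity
  set R := lam.re with hRdef
  set S : ℝ := lam.re^2 + lam.im^2 with hSdef
  set M2 : ℝ := mu.re^2 + mu.im^2 with hM2def
  have hSeq : ‖lam‖ ^ 2 = S := by
    rw [Complex.sq_norm, Complex.normSq_apply]; ring
  have hM2eq : ‖mu‖ ^ 2 = M2 := by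
    rw [Complex.sq_norm, Complex.normSq_apply]; ring
  have hS0 : 0 < S := hSeq ▸ hSpos
  have hM20 : 0 < M2 := hM2eq ▸ hM2pos
  -- extract the three bounds on h
  rw [hh₀, lt_min_iff, lt_min_iff] at hlt
  obtain ⟨h1, h2, h3⟩ := hlt
  have hA : h * ‖lam‖ < 1 := (lt_div_iff₀ hLpos).mp h1
  have hA2 : S * h^2 < 1 := by
    have := mul_nonneg hpos.le hLpos.le
    nlinarith [hSeq]
  have hB2 : 2*S*h < M2 := by
    have := (lt_div_iff₀ (by positivity : (0:ℝ) < 2 * ‖lam‖ ^ 2)).mp h2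
    rw [hSeq, hM2eq] at this; linarith
  have hC2 : h^2*(6*(-R)*S) < 4*(-2*R - M2) := by
    have hden : (0:ℝ) < -6 * lam.re * ‖lam‖ ^ 2 := by
      rw [hSeq]; nlinarith
    have hsq : h^2 < 4 * (-2 * lam.re - ‖mu‖ ^ 2)
        / (-6 * lam.re * ‖lam‖ ^ 2) := (Real.lt_sqrt hpos.le).mp h3
    have := (lt_div_iff₀ hden).mp hsq
    rw [hSeq, hM2eq] at this; nlinarith
  -- component formulas
  have ec : ‖-(lam * (h:ℂ)) / 2‖ ^ 2 = S * h^2 / 4 := by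
    rw [Complex.sq_norm]
    simp [Complex.normSq_apply, Complex.div_re, Complex.div_im]
    rw [hSdef]; ring
  have ea : ‖1 + (3/2 : ℂ) * (lam * (h:ℂ))‖ ^ 2
      = 1 + 3*R*h + (9/4)*S*h^2 := by
    rw [Complex.sq_norm]
    simp [Complex.normSq_apply, Complex.div_re, Complex.div_im, Complex.mul_re, Complex.mul_im]
    rw [hSdef, hRdef]; ring
  have ere : (((1 + (3/2 : ℂ) * (lam * (h:ℂ)))^2) * conj (-(lam * (h:ℂ)) / 2)).re
      = -(R*h + 3*S*h^2 + (9/4)*S*h^2*(R*h))/2 := by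
    simp [Complex.mul_re, Complex.mul_im, Complex.div_re, Complex.div_im,
      Complex.normSq_apply, pow_two]
    rw [hSdef, hRdef]; ring
  have eb : ‖mu * ((Real.sqrt h : ℝ):ℂ)‖ ^ 2 = M2 * h := by
    rw [Complex.sq_norm]
    simp [Complex.normSq_apply, Complex.mul_re, Complex.mul_im]
    rw [hM2def]
    nlinarith [Real.sq_sqrt hpos.le, Real.sqrt_nonneg h]
  have key := key_ineq R S M2 h hpos hS0.le hB2 hC2
  have hD : (0:ℝ) < 1 - S * h^2 / 4 := by nlinarith
  refine ⟨?_, ?_, ?_⟩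
  · have : ‖-(lam * (h:ℂ)) / 2‖ ^ 2 < 1 := by rw [ec]; nlinarith
    nlinarith [norm_nonneg (-(lam * (h:ℂ)) / 2)]
  · rw [ea, ec, ere]
    nlinarith [mul_pos (mul_pos hM20 hpos) hD, key]
  · rw [ea, ec, ere, eb]
    have hne : (1 - S * h^2 / 4) ≠ 0 := ne_of_gt hD
    rw [div_aux _ _ _ hne, lt_div_iff₀ hD]
    linarith [key]
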